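/- Let K be a field, A = K[x^α, y^β : α, β ∈ ℚ, α, β ≥ 0] the monoid algebra of ℚ≥0 × ℚ≥0 over K, and I ⊆ A the ideal generated by all monomials x^α y^β with α + β > 1. Then in the polynomial ring (A/I)[t], the element x + y·t (images of the degree-(1,0) and (0,1) monomials) is a strong atom: whenever x + y·t = f·g in (A/I)[t], either f or g is a unit. -/

import Mathlib

open scoped NNRat
open Polynomial

namespace XYTAux

abbrev Mo := ℚ≥0 × ℚ≥0

def dg (p : Mo) : ℚ≥0 := p.1 + p.2

lemma dg_add (p q : Mo) : dg (p + q) = dg p + dg q := by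
  simp [dg, Prod.fst_add, Prod.snd_add]; ring

lemma dg_eq_zero {p : Mo} (h : dg p = 0) : p = 0 := by
  have h1 : p.1 = 0 ∧ p.2 = 0 := by
    rw [dg] at h; exact (add_eq_zero).mp h
  exact Prod.ext h1.1 h1.2

variable {K : Type*} [Field K]

abbrev AA (K : Type*) [Field K] := AddMonoidAlgebra K Mo

/-- degree-`d` homogeneous component -/
noncomputable def hc (d : ℚ≥0) (a : AA K) : AA K :=
  AddMonoidAlgebra.ofCoeff (Finsupp.filter (fun p => dg p = d) a.coeff)

lemma hc_apply (d : ℚ≥0) (a : AA K) (p : Mo) : (hc d a).coeff p = if dg p = d then a.coeff p else 0 :=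
  Finsupp.filter_apply _ _ _

lemma hc_add (d : ℚ≥0) (a b : AA K) : hc d (a + b) = hc d a + hc d b := by
  apply AddMonoidAlgebra.coeff_injective; exact Finsupp.filter_add

lemma hc_zero (d : ℚ≥0) : hc d (0 : AA K) = 0 := by
  apply AddMonoidAlgebra.coeff_injective; exact Finsupp.filter_zero _

lemma hc_support (d : ℚ≥0) (a : AA K) {p : Mo} (hp : p ∈ (hc d a).coeff.support) :
    p ∈ a.coeff.support ∧ dg p = d := by
  rw [hc, AddMonoidAlgebra.coeff_ofCoeff, Finsupp.support_filter, Finset.mem_filter] at hp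
  exact ⟨hp.1, hp.2⟩

lemma hc_eq_self {d : ℚ≥0} {a : AA K} (h : ∀ p ∈ a.coeff.support, dg p = d) : hc d a = a := by
  apply AddMonoidAlgebra.coeff_injective
  rw [hc, AddMonoidAlgebra.coeff_ofCoeff, Finsupp.filter_eq_self_iff]
  intro p hp
  exact h p (Finsupp.mem_support_iff.mpr hp)

lemma hc_eq_zero {d : ℚ≥0} {a : AA K} (h : ∀ p ∈ a.coeff.support, dg p ≠ d) : hc d a = 0 := by
  rw [← AddMonoidAlgebra.coeff_eq_zero, hc, AddMonoidAlgebra.coeff_ofCoeff, Finsupp.filter_eq_zero_iff]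
  intro p hp
  by_contra hne
  exact h p (Finsupp.mem_support_iff.mpr hne) hp

lemma mem_support_mul {a b : AA K} {r : Mo} (hr : r ∈ (a * b).coeff.support) :
    ∃ p ∈ a.coeff.support, ∃ q ∈ b.coeff.support, r = p + q := by
  classical
  have := AddMonoidAlgebra.support_coeff_mul_subset a b hr
  rw [Finset.mem_add] at this
  obtain ⟨p, hp, q, hq, h⟩ := this
  exact ⟨p, hp, q, hq, h.symm⟩

-- main homogeneous-component multiplication lemma
lemma hc_mul {a b : AA K} {μ ν : ℚ≥0} (ha : ∀ p ∈ a.coeff.support, μ ≤ dg p)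
    (hb : ∀ p ∈ b.coeff.support, ν ≤ dg p) :
    hc (μ + ν) (a * b) = hc μ a * hc ν b := by
  classical
  set a1 := hc μ a with ha1def
  set b1 := hc ν b with hb1def
  set a2 : AA K := AddMonoidAlgebra.ofCoeff (Finsupp.filter (fun p => ¬ dg p = μ) a.coeff) with ha2def
  set b2 : AA K := AddMonoidAlgebra.ofCoeff (Finsupp.filter (fun p => ¬ dg p = ν) b.coeff) with hb2def
  have hsa : a1 + a2 = a := by
    apply AddMonoidAlgebra.coeff_injective; exact Finsupp.filter_pos_add_filter_neg a.coeff _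
  have hsb : b1 + b2 = b := by
    apply AddMonoidAlgebra.coeff_injective; exact Finsupp.filter_pos_add_filter_neg b.coeff _
  have ha1s : ∀ p ∈ a1.coeff.support, dg p = μ := fun p hp => (hc_support _ _ hp).2
  have hb1s : ∀ p ∈ b1.coeff.support, dg p = ν := fun p hp => (hc_support _ _ hp).2
  have ha2s : ∀ p ∈ a2.coeff.support, μ < dg p := by
    intro p hp
    rw [ha2def, AddMonoidAlgebra.coeff_ofCoeff, Finsupp.support_filter, Finset.mem_filter] at hp
    exact lt_of_le_of_ne (ha p hp.1) (Ne.symm hp.2)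
  have hb2s : ∀ p ∈ b2.coeff.support, ν < dg p := by
    intro p hp
    rw [hb2def, AddMonoidAlgebra.coeff_ofCoeff, Finsupp.support_filter, Finset.mem_filter] at hp
    exact lt_of_le_of_ne (hb p hp.1) (Ne.symm hp.2)
  have expand : a * b = a1 * b1 + (a1 * b2 + (a2 * b1 + a2 * b2)) := by
    rw [← hsa, ← hsb]; ring
  have hmain : hc (μ + ν) (a1 * b1) = a1 * b1 := by
    apply hc_eq_self
    intro r hr
    obtain ⟨p, hp, q, hq, rfl⟩ := mem_support_mul hr
    rw [dg_add, ha1s p hp, hb1s q hq]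
  have hrest : hc (μ + ν) (a1 * b2 + (a2 * b1 + a2 * b2)) = 0 := by
    have key : ∀ r ∈ (a1 * b2 + (a2 * b1 + a2 * b2)).coeff.support, μ + ν < dg r := by
      intro r hr
      have := Finsupp.support_add hr
      rw [Finset.mem_union] at this
      rcases this with h1 | h1
      · obtain ⟨p, hp, q, hq, rfl⟩ := mem_support_mul h1
        rw [dg_add]
        exact add_lt_add_of_le_of_lt (le_of_eq (ha1s p hp).symm) (hb2s q hq)
      · have := Finsupp.support_add h1
        rw [Finset.mem_union] at this
        rcases this with h2 | h2
        · obtain ⟨p, hp, q, hq, rfl⟩ := mem_support_mul h2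
          rw [dg_add]
          exact add_lt_add_of_lt_of_le (ha2s p hp) (le_of_eq (hb1s q hq).symm)
        · obtain ⟨p, hp, q, hq, rfl⟩ := mem_support_mul h2
          rw [dg_add]
          exact add_lt_add_of_lt_of_le (ha2s p hp) (le_of_lt (hb2s q hq))
    exact hc_eq_zero (fun p hp => ne_of_gt (key p hp))
  rw [expand, hc_add, hmain, hrest, add_zero]
noncomputable def Isp (K : Type*) [Field K] : Ideal (AA K) :=
  Ideal.span {m : AA K | ∃ α β : ℚ≥0, 1 < α + β ∧ m = AddMonoidAlgebra.single (α, β) (1 : K)}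

lemma mem_Isp_iff {a : AA K} : a ∈ Isp K ↔ ∀ p ∈ a.coeff.support, 1 < dg p := by
  constructor
  · intro h
    -- the set of such elements is an ideal containing the generators
    let J : Ideal (AA K) :=
      { carrier := {a : AA K | ∀ p ∈ a.coeff.support, 1 < dg p}
        add_mem' := by
          intro u v hu hv p hp
          have := Finsupp.support_add hp
          rw [Finset.mem_union] at this
          rcases this with h1 | h1
          · exact hu p h1
          · exact hv p h1
        zero_mem' := by
          intro p hp
          simp at hp
        smul_mem' := by
          intro r u hu p hp
          rw [smul_eq_mul] at hp
          obtain ⟨q1, hq1, q2, hq2, rfl⟩ := mem_support_mul hp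
          rw [dg_add]
          calc (1 : ℚ≥0) < dg q2 := hu q2 hq2
            _ ≤ dg q1 + dg q2 := le_add_self }
    have hJ : Isp K ≤ J := by
      rw [Isp, Ideal.span_le]
      rintro m ⟨α, β, hαβ, rfl⟩
      intro p hp
      rw [AddMonoidAlgebra.coeff_single] at hp
      have := Finsupp.support_single_subset hp
      rw [Finset.mem_singleton] at this
      subst this
      simpa [dg] using hαβ
    exact hJ h
  · intro h
    have : a = ∑ p ∈ a.coeff.support, AddMonoidAlgebra.single p (a.coeff p) := by
      exact (AddMonoidAlgebra.sum_coeff_single a).symm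
    rw [this]
    apply Ideal.sum_mem
    intro p hp
    have hgen : AddMonoidAlgebra.single p (1 : K) ∈ Isp K := by
      apply Ideal.subset_span
      exact ⟨p.1, p.2, h p hp, by rw [Prod.mk.eta]⟩
    have : (AddMonoidAlgebra.single p (a.coeff p) : AA K) =
        AddMonoidAlgebra.single (0 : Mo) (a.coeff p) * AddMonoidAlgebra.single p (1 : K) := by
      rw [AddMonoidAlgebra.single_mul_single, zero_add, mul_one]
    rw [this]
    exact Ideal.mul_mem_left _ _ hgen

lemma mk_single_ne_zero {p : Mo} (hp : dg p ≤ 1) :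
    Ideal.Quotient.mk (Isp K) (AddMonoidAlgebra.single p (1 : K)) ≠ 0 := by
  rw [Ne, Ideal.Quotient.eq_zero_iff_mem, mem_Isp_iff]
  intro h
  have h1 := h p (by rw [Finsupp.mem_support_iff, AddMonoidAlgebra.coeff_single, Finsupp.single_eq_same]; exact one_ne_zero)
  exact absurd hp (not_le.mpr h1)

lemma isNilpotent_mk {a : AA K} (h : ∀ p ∈ a.coeff.support, 0 < dg p) :
    IsNilpotent (Ideal.Quotient.mk (Isp K) a) := by
  classical
  rcases eq_or_ne a 0 with rfl | ha
  · rw [map_zero]; exact IsNilpotent.zero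
  have hsupp : a.coeff.support.Nonempty := Finsupp.support_nonempty_iff.mpr (AddMonoidAlgebra.coeff_eq_zero.not.mpr ha)
  have hD : (a.coeff.support.image dg).Nonempty := hsupp.image dg
  set ε := (a.coeff.support.image dg).min' hD with hε
  have hεmem : ε ∈ a.coeff.support.image dg := Finset.min'_mem _ _
  obtain ⟨p0, hp0, hp0e⟩ := Finset.mem_image.mp hεmem
  have hεpos : 0 < ε := hp0e ▸ h p0 hp0
  have hεle : ∀ p ∈ a.coeff.support, ε ≤ dg p := by
    intro p hp
    exact Finset.min'_le _ _ (Finset.mem_image_of_mem dg hp)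
  obtain ⟨n, hn⟩ := exists_nat_gt (1 / ε)
  have hne : (1 : ℚ≥0) < n * ε := by
    rwa [div_lt_iff₀ hεpos] at hn
  have key : ∀ k : ℕ, ∀ p ∈ (a ^ k).coeff.support, (k : ℚ≥0) * ε ≤ dg p := by
    intro k
    induction k with
    | zero =>
      intro p hp
      simp
    | succ k ih =>
      intro p hp
      rw [pow_succ] at hp
      obtain ⟨q1, hq1, q2, hq2, rfl⟩ := mem_support_mul hp
      rw [dg_add]
      push_cast
      rw [add_mul, one_mul]
      exact add_le_add (ih q1 hq1) (hεle q2 hq2)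
  refine ⟨n, ?_⟩
  rw [← map_pow, Ideal.Quotient.eq_zero_iff_mem, mem_Isp_iff]
  intro p hp
  calc (1 : ℚ≥0) < n * ε := hne
    _ ≤ dg p := key n p hp

lemma isUnit_mk {a : AA K} (h0 : a.coeff 0 ≠ 0) :
    IsUnit (Ideal.Quotient.mk (Isp K) a) := by
  set u := Ideal.Quotient.mk (Isp K) (AddMonoidAlgebra.single (0 : Mo) (a.coeff 0)) with hu
  have huu : IsUnit u := by
    apply IsUnit.of_mul_eq_one (a := u) (Ideal.Quotient.mk (Isp K) (AddMonoidAlgebra.single (0 : Mo) (a.coeff 0)⁻¹))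
    rw [hu, ← map_mul, AddMonoidAlgebra.single_mul_single, zero_add, mul_inv_cancel₀ h0]
    rw [← AddMonoidAlgebra.one_def, map_one]
  have hnil : IsNilpotent (Ideal.Quotient.mk (Isp K) (a.erase 0 : AA K)) := by
    apply isNilpotent_mk
    intro p hp
    rw [AddMonoidAlgebra.coeff_erase, Finsupp.support_erase, Finset.mem_erase] at hp
    have : dg p ≠ 0 := fun hd => hp.1 (dg_eq_zero hd)
    exact pos_iff_ne_zero.mpr this
  have hsplit : (AddMonoidAlgebra.single (0 : Mo) (a.coeff 0) : AA K) + (a.erase 0 : AA K) = a :=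
    AddMonoidAlgebra.single_add_erase 0 a
  have := IsNilpotent.isUnit_add_left_of_commute hnil huu (Commute.all _ _)
  rw [hu, ← map_add, hsplit] at this
  exact this
noncomputable def hcPoly (d : ℚ≥0) (F : (AA K)[X]) : (AA K)[X] :=
  ⟨AddMonoidAlgebra.ofCoeff (Finsupp.mapRange (hc d) (hc_zero d) F.toFinsupp.coeff)⟩

lemma hcPoly_coeff (d : ℚ≥0) (F : (AA K)[X]) (n : ℕ) :
    (hcPoly d F).coeff n = hc d (F.coeff n) := by
  rw [hcPoly]
  rw [Polynomial.coeff, Polynomial.coeff]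
  simp [Finsupp.mapRange_apply]

noncomputable def DS (F : (AA K)[X]) : Finset ℚ≥0 :=
  F.support.biUnion fun n => (F.coeff n).coeff.support.image dg

lemma DS_nonempty {F : (AA K)[X]} (hF : F ≠ 0) : (DS F).Nonempty := by
  have : ∃ n, F.coeff n ≠ 0 := by
    by_contra h
    push_neg at h
    exact hF (Polynomial.ext fun n => by rw [h n, Polynomial.coeff_zero])
  obtain ⟨n, hn⟩ := this
  obtain ⟨p, hp⟩ := Finsupp.support_nonempty_iff.mpr (AddMonoidAlgebra.coeff_eq_zero.not.mpr hn)
  exact ⟨dg p, Finset.mem_biUnion.mpr ⟨n, Polynomial.mem_support_iff.mpr hn,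
    Finset.mem_image_of_mem dg hp⟩⟩

noncomputable def mindeg (F : (AA K)[X]) : ℚ≥0 :=
  if h : (DS F).Nonempty then (DS F).min' h else 0

lemma mindeg_le (F : (AA K)[X]) : ∀ n : ℕ, ∀ p ∈ (F.coeff n).coeff.support, mindeg F ≤ dg p := by
  intro n p hp
  have hn : F.coeff n ≠ 0 := by
    intro h; rw [h] at hp; simp at hp
  have hmem : dg p ∈ DS F :=
    Finset.mem_biUnion.mpr ⟨n, Polynomial.mem_support_iff.mpr hn, Finset.mem_image_of_mem dg hp⟩
  have hne : (DS F).Nonempty := ⟨dg p, hmem⟩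
  rw [mindeg, dif_pos hne]
  exact Finset.min'_le _ _ hmem

lemma hcPoly_mindeg_ne_zero {F : (AA K)[X]} (hF : F ≠ 0) : hcPoly (mindeg F) F ≠ 0 := by
  have hne : (DS F).Nonempty := DS_nonempty hF
  have hmem : mindeg F ∈ DS F := by
    rw [mindeg, dif_pos hne]; exact Finset.min'_mem _ _
  obtain ⟨n, hn, hmem2⟩ := Finset.mem_biUnion.mp hmem
  obtain ⟨p, hp, hdg⟩ := Finset.mem_image.mp hmem2
  intro h
  have : (hcPoly (mindeg F) F).coeff n = 0 := by rw [h]; simp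
  rw [hcPoly_coeff] at this
  have hps : p ∈ (hc (mindeg F) (F.coeff n)).coeff.support := by
    rw [hc, AddMonoidAlgebra.coeff_ofCoeff, Finsupp.support_filter, Finset.mem_filter]
    exact ⟨hp, hdg⟩
  rw [this] at hps
  simp at hps

lemma hc_finset_sum (d : ℚ≥0) {ι : Type*} (s : Finset ι) (f : ι → AA K) :
    hc d (∑ i ∈ s, f i) = ∑ i ∈ s, hc d (f i) :=
  map_sum (AddMonoidHom.mk' (hc d) (hc_add d)) f s

noncomputable def X0 (K : Type*) [Field K] : AA K := AddMonoidAlgebra.single ((1 : ℚ≥0), (0 : ℚ≥0)) (1 : K)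
noncomputable def Y0 (K : Type*) [Field K] : AA K := AddMonoidAlgebra.single ((0 : ℚ≥0), (1 : ℚ≥0)) (1 : K)
noncomputable def zp (K : Type*) [Field K] : (AA K)[X] := C (X0 K) + C (Y0 K) * X

lemma X0_ne_zero : X0 K ≠ 0 := by
  rw [X0, Ne, AddMonoidAlgebra.single_eq_zero]
  exact one_ne_zero
lemma Y0_ne_zero : Y0 K ≠ 0 := by
  rw [Y0, Ne, AddMonoidAlgebra.single_eq_zero]
  exact one_ne_zero

lemma dg_X0 : dg ((1 : ℚ≥0), (0 : ℚ≥0)) = 1 := by simp [dg]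
lemma dg_Y0 : dg ((0 : ℚ≥0), (1 : ℚ≥0)) = 1 := by simp [dg]

lemma hc_X0 (d : ℚ≥0) : hc d (X0 K) = if d = 1 then X0 K else 0 := by
  rw [X0, hc]
  split_ifs with h
  · subst h; exact congrArg AddMonoidAlgebra.ofCoeff (Finsupp.filter_single_of_pos _ dg_X0)
  · exact congrArg AddMonoidAlgebra.ofCoeff
      (Finsupp.filter_single_of_neg _ (by rw [dg_X0]; exact fun hh => h hh.symm))

lemma hc_Y0 (d : ℚ≥0) : hc d (Y0 K) = if d = 1 then Y0 K else 0 := by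
  rw [Y0, hc]
  split_ifs with h
  · subst h; exact congrArg AddMonoidAlgebra.ofCoeff (Finsupp.filter_single_of_pos _ dg_Y0)
  · exact congrArg AddMonoidAlgebra.ofCoeff
      (Finsupp.filter_single_of_neg _ (by rw [dg_Y0]; exact fun hh => h hh.symm))

lemma zp_coeff_zero : (zp K).coeff 0 = X0 K := by simp [zp]
lemma zp_coeff_one : (zp K).coeff 1 = Y0 K := by simp [zp]
lemma zp_coeff_ge (n : ℕ) (hn : 2 ≤ n) : (zp K).coeff n = 0 := by
  have h0 : n ≠ 0 := by omega
  have h1 : n ≠ 1 := by omega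
  simp [zp, Polynomial.coeff_C, Polynomial.coeff_X, h0, h1, Ne.symm h1]


lemma split (F G : (AA K)[X]) (hF : F ≠ 0) (hG : G ≠ 0)
    (E : ∀ n : ℕ, ∀ p ∈ ((F * G).coeff n - (zp K).coeff n).coeff.support, 1 < dg p) :
    mindeg F + mindeg G = 1 ∧
      hcPoly (mindeg F) F * hcPoly (mindeg G) G = zp K := by
  set μ := mindeg F with hμ
  set ν := mindeg G with hν
  have hFGc : ∀ n : ℕ, (F * G).coeff n
      = (zp K).coeff n + ((F * G).coeff n - (zp K).coeff n) := fun n => by ring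
  have key : ∀ n : ℕ, (hcPoly μ F * hcPoly ν G).coeff n = hc (μ + ν) ((F * G).coeff n) := by
    intro n
    rw [Polynomial.coeff_mul, Polynomial.coeff_mul, hc_finset_sum]
    apply Finset.sum_congr rfl
    intro ij _
    rw [hcPoly_coeff, hcPoly_coeff]
    exact (hc_mul (mindeg_le F ij.1) (mindeg_le G ij.2)).symm
  have hcE : ∀ d : ℚ≥0, d ≤ 1 → ∀ n : ℕ,
      hc d ((F * G).coeff n - (zp K).coeff n) = 0 := by
    intro d hd n
    apply hc_eq_zero
    intro p hp hdp
    exact absurd (E n p hp) (by rw [hdp]; exact not_lt.mpr hd)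
  rcases lt_trichotomy (μ + ν) 1 with hlt | heq | hgt
  · exfalso
    have hzero : hcPoly μ F * hcPoly ν G = 0 := by
      apply Polynomial.ext
      intro n
      rw [key n, hFGc n, hc_add, hcE _ (le_of_lt hlt) n, add_zero, Polynomial.coeff_zero]
      match n with
      | 0 => rw [zp_coeff_zero, hc_X0, if_neg (ne_of_lt hlt)]
      | 1 => rw [zp_coeff_one, hc_Y0, if_neg (ne_of_lt hlt)]
      | (m+2) => rw [zp_coeff_ge (m+2) (by omega), hc_zero]
    exact mul_ne_zero (hcPoly_mindeg_ne_zero hF) (hcPoly_mindeg_ne_zero hG) hzero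
  · refine ⟨heq, ?_⟩
    apply Polynomial.ext
    intro n
    rw [key n, hFGc n, hc_add, heq, hcE 1 le_rfl n, add_zero]
    match n with
    | 0 => rw [zp_coeff_zero, hc_X0, if_pos rfl]
    | 1 => rw [zp_coeff_one, hc_Y0, if_pos rfl]
    | (m+2) => rw [zp_coeff_ge (m+2) (by omega), hc_zero]
  · exfalso
    have way1 : hc 1 ((F * G).coeff 0) = X0 K := by
      rw [hFGc 0, hc_add, hcE 1 le_rfl 0, add_zero, zp_coeff_zero, hc_X0, if_pos rfl]
    have way2 : hc 1 ((F * G).coeff 0) = 0 := by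
      apply hc_eq_zero
      intro p hp
      rw [Polynomial.mul_coeff_zero] at hp
      obtain ⟨q1, hq1, q2, hq2, rfl⟩ := mem_support_mul hp
      intro hd
      rw [dg_add] at hd
      have h1 := mindeg_le F 0 q1 hq1
      have h2 := mindeg_le G 0 q2 hq2
      have : (1 : ℚ≥0) < dg q1 + dg q2 := lt_of_lt_of_le hgt (add_le_add h1 h2)
      rw [hd] at this
      exact lt_irrefl _ this
    rw [way2] at way1
    exact X0_ne_zero way1.symm

lemma unit_side (F G : (AA K)[X]) (hF : F ≠ 0) (hG : G ≠ 0)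
    (E : ∀ n : ℕ, ∀ p ∈ ((F * G).coeff n - (zp K).coeff n).coeff.support, 1 < dg p)
    (hconst : (hcPoly (mindeg G) G).natDegree = 0) :
    IsUnit (Polynomial.map (Ideal.Quotient.mk (Isp K)) G) := by
  obtain ⟨hsum, hmul⟩ := split F G hF hG E
  set μ := mindeg F with hμ
  set ν := mindeg G with hν
  set P := hcPoly μ F with hP
  set Q := hcPoly ν G with hQdef
  have hPne : P ≠ 0 := hcPoly_mindeg_ne_zero hF
  have hQne : Q ≠ 0 := hcPoly_mindeg_ne_zero hG
  have hQC : Q = C (Q.coeff 0) := Polynomial.eq_C_of_natDegree_eq_zero hconst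
  set b := Q.coeff 0 with hb
  have hbne : b ≠ 0 := by
    intro hb0
    rw [hb0, map_zero] at hQC
    exact hQne hQC
  have hzdeg : (zp K).natDegree = 1 := by
    rw [zp, add_comm]
    exact Polynomial.natDegree_linear Y0_ne_zero
  have hPdeg : P.natDegree = 1 := by
    have hd := Polynomial.natDegree_mul hPne hQne
    rw [hmul, hzdeg, hconst, add_zero] at hd
    exact hd.symm
  have ha1 : P.coeff 1 ≠ 0 := by
    have hl := Polynomial.leadingCoeff_ne_zero.mpr hPne
    rwa [Polynomial.leadingCoeff, hPdeg] at hl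
  have hmul' : P * C b = zp K := by rw [← hQC]; exact hmul
  have eq0 : P.coeff 0 * b = X0 K := by
    have hc0 := congrArg (fun p : (AA K)[X] => p.coeff 0) hmul'
    simpa [Polynomial.coeff_mul_C, zp_coeff_zero] using hc0
  have eq1 : P.coeff 1 * b = Y0 K := by
    have hc1 := congrArg (fun p : (AA K)[X] => p.coeff 1) hmul'
    simpa [Polynomial.coeff_mul_C, zp_coeff_one] using hc1
  have cross : X0 K * P.coeff 1 = Y0 K * P.coeff 0 := by
    rw [← eq0, ← eq1]; ring
  obtain ⟨q, hq⟩ := Finsupp.support_nonempty_iff.mpr (AddMonoidAlgebra.coeff_eq_zero.not.mpr ha1)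
  have hP1 : P.coeff 1 = hc μ (F.coeff 1) := hcPoly_coeff μ F 1
  have hdq : dg q = μ := by
    rw [hP1] at hq
    exact (hc_support _ _ hq).2
  have hmem : ((1 : ℚ≥0), (0 : ℚ≥0)) + q ∈ (X0 K * P.coeff 1).coeff.support := by
    rw [Finsupp.mem_support_iff, X0]
    rw [AddMonoidAlgebra.coeff_single_mul_eq_mul_coeff (x := P.coeff 1) (r := (1 : K))
      (m := ((1 : ℚ≥0), (0 : ℚ≥0))) (m₁ := ((1 : ℚ≥0), (0 : ℚ≥0)) + q) q
      (fun a _ => ⟨fun h => add_left_cancel h, fun h => by rw [h]⟩)]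
    rw [one_mul]
    rw [hP1] at hq
    rw [hP1]
    exact Finsupp.mem_support_iff.mp hq
  rw [cross] at hmem
  have hsub := AddMonoidAlgebra.support_coeff_mul_subset (Y0 K) (P.coeff 0) hmem
  rw [Finset.mem_add] at hsub
  obtain ⟨u, hu, v, hv, huv⟩ := hsub
  rw [Y0, AddMonoidAlgebra.coeff_single] at hu
  have hu' : u = ((0 : ℚ≥0), (1 : ℚ≥0)) :=
    Finset.mem_singleton.mp (Finsupp.support_single_subset hu)
  subst hu'
  have hq2 : q.2 = 1 + v.2 := by
    have hsnd := congrArg Prod.snd huv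
    simpa [Prod.snd_add] using hsnd.symm
  have hq2ge : (1 : ℚ≥0) ≤ q.2 := by rw [hq2]; exact le_self_add
  have hμle : μ ≤ 1 := by rw [← hsum]; exact le_self_add
  have hq2le : q.2 ≤ μ := by rw [← hdq, dg]; exact le_add_self
  have hμ1 : μ = 1 := le_antisymm hμle (le_trans hq2ge hq2le)
  have hν0 : ν = 0 := by
    have hh := hsum
    rw [hμ1] at hh
    exact add_eq_left.mp hh
  -- now prove G maps to a unit
  have hGcoeff : ∀ j : ℕ, hc 0 (G.coeff j) = (C b).coeff j := by
    intro j
    rw [← hν0, ← hcPoly_coeff, ← hQdef, ← hQC]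
  have hbeq : hc 0 (G.coeff 0) = b := by
    rw [hGcoeff 0, Polynomial.coeff_C_zero]
  have hb0 : (G.coeff 0).coeff 0 ≠ 0 := by
    have happ : b.coeff 0 = (G.coeff 0).coeff 0 := by
      rw [← hbeq, hc_apply, if_pos (by simp [dg])]
    intro hzero
    apply hbne
    have hsupp : b.coeff.support ⊆ {0} := by
      intro p hp
      rw [← hbeq] at hp
      have := (hc_support _ _ hp).2
      rw [Finset.mem_singleton]
      exact dg_eq_zero this
    have := Finsupp.support_subset_singleton.mp hsupp
    apply AddMonoidAlgebra.coeff_injective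
    rw [AddMonoidAlgebra.coeff_zero, this, happ, hzero, Finsupp.single_zero]
  rw [Polynomial.isUnit_iff_coeff_isUnit_isNilpotent]
  constructor
  · rw [Polynomial.coeff_map]
    exact isUnit_mk hb0
  · intro j hj
    rw [Polynomial.coeff_map]
    apply isNilpotent_mk
    intro p hp
    have hzero : hc 0 (G.coeff j) = 0 := by
      rw [hGcoeff j, Polynomial.coeff_C, if_neg hj]
    have hdne : dg p ≠ 0 := by
      intro hd
      have hmem2 : p ∈ (hc 0 (G.coeff j)).coeff.support := by
        rw [hc, AddMonoidAlgebra.coeff_ofCoeff, Finsupp.support_filter, Finset.mem_filter]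
        exact ⟨hp, hd⟩
      rw [hzero] at hmem2
      simp at hmem2
    exact pos_iff_ne_zero.mpr hdne

end XYTAux

theorem x_plus_yt_strong_atom (K : Type*) [Field K] :
    let A := AddMonoidAlgebra K (ℚ≥0 × ℚ≥0)
    let I : Ideal A := Ideal.span
      {m : A | ∃ α β : ℚ≥0, 1 < α + β ∧ m = AddMonoidAlgebra.single (α, β) (1 : K)}
    let x : A ⧸ I := Ideal.Quotient.mk I (AddMonoidAlgebra.single ((1 : ℚ≥0), (0 : ℚ≥0)) (1 : K))
    let y : A ⧸ I := Ideal.Quotient.mk I (AddMonoidAlgebra.single ((0 : ℚ≥0), (1 : ℚ≥0)) (1 : K))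
    ∀ f g : Polynomial (A ⧸ I),
      Polynomial.C x + Polynomial.C y * Polynomial.X = f * g →
        IsUnit f ∨ IsUnit g := by
  intro A I x y f g h
  have hI : I = XYTAux.Isp K := rfl
  obtain ⟨F, hF⟩ :=
    Polynomial.map_surjective (Ideal.Quotient.mk I) Ideal.Quotient.mk_surjective f
  obtain ⟨G, hG⟩ :=
    Polynomial.map_surjective (Ideal.Quotient.mk I) Ideal.Quotient.mk_surjective g
  have hzp : Polynomial.map (Ideal.Quotient.mk I) (XYTAux.zp K)
      = Polynomial.C x + Polynomial.C y * Polynomial.X := by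
    rw [XYTAux.zp]
    simp only [Polynomial.map_add, Polynomial.map_mul, Polynomial.map_C, Polynomial.map_X]
    rfl
  have hy : y ≠ 0 := XYTAux.mk_single_ne_zero (le_of_eq XYTAux.dg_Y0)
  have hFne : F ≠ 0 := by
    intro h0
    rw [h0, Polynomial.map_zero] at hF
    rw [← hF, zero_mul] at h
    have h1 := congrArg (fun p => Polynomial.coeff p 1) h
    simp only [Polynomial.coeff_add, Polynomial.coeff_C, Polynomial.coeff_C_mul,
      Polynomial.coeff_X_one, Polynomial.coeff_zero, mul_one] at h1
    rw [if_neg (by omega : ¬ (1 : ℕ) = 0), zero_add] at h1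
    exact hy h1
  have hGne : G ≠ 0 := by
    intro h0
    rw [h0, Polynomial.map_zero] at hG
    rw [← hG, mul_zero] at h
    have h1 := congrArg (fun p => Polynomial.coeff p 1) h
    simp only [Polynomial.coeff_add, Polynomial.coeff_C, Polynomial.coeff_C_mul,
      Polynomial.coeff_X_one, Polynomial.coeff_zero, mul_one] at h1
    rw [if_neg (by omega : ¬ (1 : ℕ) = 0), zero_add] at h1
    exact hy h1
  have hmapsub : ∀ n : ℕ,
      Ideal.Quotient.mk I ((F * G).coeff n - (XYTAux.zp K).coeff n) = 0 := by
    intro n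
    have h2 : Polynomial.map (Ideal.Quotient.mk I) (F * G)
        = Polynomial.map (Ideal.Quotient.mk I) (XYTAux.zp K) := by
      rw [Polynomial.map_mul, hF, hG, hzp]
      exact h.symm
    have h3 := congrArg (fun p => Polynomial.coeff p n) h2
    simp only [Polynomial.coeff_map] at h3
    rw [map_sub, h3, sub_self]
  have E : ∀ n : ℕ, ∀ p ∈ ((F * G).coeff n - (XYTAux.zp K).coeff n).coeff.support,
      1 < XYTAux.dg p := by
    intro n
    have h4 := hmapsub n
    rw [Ideal.Quotient.eq_zero_iff_mem] at h4
    exact (XYTAux.mem_Isp_iff).mp (hI ▸ h4)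
  obtain ⟨hsum, hmul⟩ := XYTAux.split F G hFne hGne E
  have hPne := XYTAux.hcPoly_mindeg_ne_zero hFne
  have hQne := XYTAux.hcPoly_mindeg_ne_zero hGne
  have hzdeg : (XYTAux.zp K).natDegree = 1 := by
    rw [XYTAux.zp, add_comm]
    exact Polynomial.natDegree_linear XYTAux.Y0_ne_zero
  have hd := Polynomial.natDegree_mul hPne hQne
  rw [hmul, hzdeg] at hd
  rcases (by omega : (XYTAux.hcPoly (XYTAux.mindeg G) G).natDegree = 0 ∨
      (XYTAux.hcPoly (XYTAux.mindeg F) F).natDegree = 0) with h0 | h0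
  · right
    rw [← hG]
    exact XYTAux.unit_side F G hFne hGne E h0
  · left
    rw [← hF]
    have E' : ∀ n : ℕ, ∀ p ∈ ((G * F).coeff n - (XYTAux.zp K).coeff n).coeff.support,
        1 < XYTAux.dg p := by
      rw [mul_comm G F]
      exact E
    exact XYTAux.unit_side G F hGne hFne E' h0
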